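/- Let r, s ≥ 2 be multiplicatively independent integers (log r / log s is irrational). If A ⊆ ℕ₀ is simultaneously ×r-invariant and ×s-invariant, then either A is finite or A = ℕ₀. -/

import Mathlib

/-- `Φ_r` deletes the least significant base-`r` digit: `Φ_r(n) = ⌊n/r⌋`. -/
def Phi (r n : ℕ) : ℕ := n / r

/-- `Ψ_r` deletes the most significant base-`r` digit:
`Ψ_r(n) = n - r^k ⌊n/r^k⌋ = n % r^k` where `k = ⌊log n / log r⌋` (and `Ψ_r(0) = 0`). -/
def Psi (r n : ℕ) : ℕ := n % r ^ Nat.log r n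

/-- A set `A ⊆ ℕ₀` is `×r`-invariant if `Φ_r(A) ⊆ A` and `Ψ_r(A) ⊆ A`. -/
def TimesRInvariant (r : ℕ) (A : Set ℕ) : Prop :=
  (∀ n ∈ A, Phi r n ∈ A) ∧ (∀ n ∈ A, Psi r n ∈ A)


lemma phi_iter {t : ℕ} {A : Set ℕ} (h : ∀ n ∈ A, n / t ∈ A) :
    ∀ (i : ℕ), ∀ n ∈ A, n / t ^ i ∈ A := by
  intro i
  induction i with
  | zero => simp only [pow_zero, Nat.div_one]; exact fun n hn => hn
  | succ i ih =>
    intro n hn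
    have := h _ (ih n hn)
    rwa [Nat.div_div_eq_div_mul, ← pow_succ] at this

lemma exists_small_comb {α : ℝ} (hα : Irrational α) {ε : ℝ} (hε : 0 < ε) :
    ∃ a : ℕ, 0 < a ∧ ∃ c : ℤ, 0 < |(a : ℝ) * α + c| ∧ |(a : ℝ) * α + c| < ε := by
  obtain ⟨n, hn⟩ := exists_nat_gt (1 / ε)
  have hnR : (0:ℝ) < n := lt_trans (by positivity) hn
  have hcard : Fintype.card (Fin n) < Fintype.card (Fin (n+1)) := by simp
  obtain ⟨p, q, hpq, hfeq⟩ := Fintype.exists_ne_map_eq_of_card_lt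
    (fun i : Fin (n+1) => (⟨⌊Int.fract (((i : ℕ) : ℝ) * α) * n⌋₊, by
      rw [Nat.floor_lt (mul_nonneg (Int.fract_nonneg _) hnR.le)]
      calc Int.fract (((i : ℕ) : ℝ) * α) * n < 1 * n :=
            mul_lt_mul_of_pos_right (Int.fract_lt_one _) hnR
        _ = n := one_mul _⟩ : Fin n)) hcard
  wlog hlt : (p : ℕ) < (q : ℕ) generalizing p q
  · exact this q p hpq.symm hfeq.symm
      (lt_of_le_of_ne (le_of_not_gt hlt) (fun h => hpq (Fin.ext h.symm)))
  set yp := Int.fract (((p : ℕ) : ℝ) * α) with hyp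
  set yq := Int.fract (((q : ℕ) : ℝ) * α) with hyq
  have hfeq' : ⌊yp * n⌋₊ = ⌊yq * n⌋₊ := by
    have := congrArg Fin.val hfeq
    simpa using this
  have hclose : |yq - yp| < 1 / n := by
    have h1 : (⌊yp * n⌋₊ : ℝ) ≤ yp * n :=
      Nat.floor_le (mul_nonneg (Int.fract_nonneg _) hnR.le)
    have h2 : yp * n < ⌊yp * n⌋₊ + 1 := Nat.lt_floor_add_one _
    have h3 : (⌊yp * n⌋₊ : ℝ) ≤ yq * n := by
      rw [hfeq']; exact Nat.floor_le (mul_nonneg (Int.fract_nonneg _) hnR.le)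
    have h4 : yq * n < (⌊yp * n⌋₊ : ℝ) + 1 := by
      rw [hfeq']; exact Nat.lt_floor_add_one _
    rw [abs_sub_lt_iff]
    constructor <;> rw [lt_div_iff₀ hnR] <;> nlinarith
  refine ⟨(q : ℕ) - (p : ℕ), Nat.sub_pos_of_lt hlt,
    ⌊((p : ℕ) : ℝ) * α⌋ - ⌊((q : ℕ) : ℝ) * α⌋, ?_, ?_⟩
  · rw [abs_pos]
    intro h0
    rw [Nat.cast_sub hlt.le] at h0
    push_cast at h0
    apply hα.ne_rat
      (((⌊((q:ℕ):ℝ) * α⌋ - ⌊((p:ℕ):ℝ) * α⌋ : ℤ) : ℚ) / (((q:ℕ):ℚ) - ((p:ℕ):ℚ)))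
    have hneQ : (((q:ℕ):ℚ) - ((p:ℕ):ℚ)) ≠ 0 :=
      sub_ne_zero.mpr (fun h => hlt.ne' (by exact_mod_cast h))
    have hneR : (((q:ℕ):ℝ) - ((p:ℕ):ℝ)) ≠ 0 :=
      sub_ne_zero.mpr (fun h => hlt.ne' (by exact_mod_cast h))
    push_cast
    rw [eq_div_iff hneR]
    nlinarith [h0]
  · have heq : ((((q : ℕ) - (p : ℕ) : ℕ)) : ℝ) * α +
        ((⌊((p : ℕ) : ℝ) * α⌋ - ⌊((q : ℕ) : ℝ) * α⌋ : ℤ) : ℝ) = yq - yp := by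
      rw [hyq, hyp, Int.fract, Int.fract, Nat.cast_sub hlt.le]
      push_cast
      ring
    rw [heq]
    calc |yq - yp| < 1 / n := hclose
      _ < ε := by
        rw [div_lt_iff₀ hnR]
        rw [div_lt_iff₀ hε] at hn
        linarith

lemma sweep_pos {δ u v : ℝ} (hδ : 0 < δ) (hlen : 2 * δ ≤ v - u) (x : ℝ) :
    ∃ k : ℕ, (k : ℝ) * δ ≤ 1 ∧ ∃ j : ℤ, (j : ℝ) + u ≤ x - k * δ ∧ x - (k : ℝ) * δ ≤ j + v := by
  set j : ℤ := ⌊x - u⌋ with hjdef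
  have hj1 : (j : ℝ) ≤ x - u := Int.floor_le _
  have hj2 : x - u < j + 1 := Int.lt_floor_add_one _
  by_cases hcase : x ≤ (j : ℝ) + v
  · exact ⟨0, by simp, j, by push_cast; linarith, by push_cast; linarith⟩
  push_neg at hcase
  have hex : ∃ k : ℕ, x - (k : ℝ) * δ ≤ (j : ℝ) + v := by
    obtain ⟨k, hk⟩ := exists_nat_gt ((x - ((j : ℝ) + v)) / δ)
    refine ⟨k, ?_⟩
    rw [div_lt_iff₀ hδ] at hk
    linarith
  set k := Nat.find hex with hkdef
  have hk : x - (k : ℝ) * δ ≤ (j : ℝ) + v := Nat.find_spec hex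
  have hkne : k ≠ 0 := by
    intro h0
    rw [h0] at hk
    push_cast at hk
    linarith
  have hprev : ¬ (x - ((k - 1 : ℕ) : ℝ) * δ ≤ (j : ℝ) + v) :=
    Nat.find_min hex (Nat.pred_lt hkne)
  push_neg at hprev
  have hcast : ((k - 1 : ℕ) : ℝ) = (k : ℝ) - 1 := by
    have h1 : 1 ≤ k := Nat.one_le_iff_ne_zero.mpr hkne
    push_cast [Nat.cast_sub h1]
    ring
  rw [hcast] at hprev
  refine ⟨k, ?_, j, ?_, hk⟩
  · nlinarith
  · nlinarith

lemma sweep {δ u v : ℝ} (hδ : δ ≠ 0) (hlen : 2 * |δ| ≤ v - u) (x : ℝ) :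
    ∃ k : ℕ, (k : ℝ) * |δ| ≤ 1 ∧ ∃ j : ℤ, (j : ℝ) + u ≤ x - k * δ ∧ x - (k : ℝ) * δ ≤ j + v := by
  rcases hδ.lt_or_gt with hneg | hpos
  · have habs : |δ| = -δ := abs_of_neg hneg
    rw [habs] at hlen ⊢
    obtain ⟨k, hk1, j, hj1, hj2⟩ := sweep_pos (δ := -δ) (u := -v) (v := -u)
      (by linarith) (by linarith) (-x)
    refine ⟨k, hk1, -j, ?_, ?_⟩ <;> push_cast at hj1 hj2 ⊢ <;> linarith
  · have habs : |δ| = δ := abs_of_pos hpos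
    rw [habs] at hlen ⊢
    exact sweep_pos hpos hlen x

theorem stmt11 (r s : ℕ) (hr : 2 ≤ r) (hs : 2 ≤ s)
    (hind : Irrational (Real.log r / Real.log s))
    (A : Set ℕ) (hAr : TimesRInvariant r A) (hAs : TimesRInvariant s A) :
    A.Finite ∨ A = Set.univ := by
  by_cases hfin : A.Finite
  · exact Or.inl hfin
  right
  have hinf : A.Infinite := hfin
  have hr1 : 1 < r := hr
  have hs1 : 1 < s := hs
  have hrR : (1:ℝ) < (r:ℝ) := by exact_mod_cast hr1
  have hsR : (1:ℝ) < (s:ℝ) := by exact_mod_cast hs1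
  have hrpos : (0:ℝ) < (r:ℝ) := by linarith
  have hrne : (r:ℝ) ≠ 1 := ne_of_gt hrR
  have hPr : ∀ i : ℕ, ∀ n ∈ A, n / r ^ i ∈ A := phi_iter (fun n hn => hAr.1 n hn)
  have hPs : ∀ i : ℕ, ∀ n ∈ A, n / s ^ i ∈ A := phi_iter (fun n hn => hAs.1 n hn)
  rw [Set.eq_univ_iff_forall]
  intro m
  obtain ⟨n0, hn0, -⟩ := hinf.exists_gt 0
  have h0A : (0:ℕ) ∈ A := by
    have := hPr n0 n0 hn0
    rwa [Nat.div_eq_of_lt (Nat.lt_pow_self hr1 : n0 < r ^ n0)] at this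
  rcases Nat.eq_zero_or_pos m with rfl | hm
  · exact h0A
  have hmR : (0:ℝ) < (m:ℝ) := by exact_mod_cast hm
  set α := Real.logb r s with hα
  have hαpos : 0 < α := Real.logb_pos hrR hsR
  have hαirr : Irrational α := by
    have h : α = (Real.log r / Real.log s)⁻¹ := by
      rw [hα, Real.logb, inv_div]
    rw [h]; exact hind.inv
  set c := Real.logb r m with hc
  set d := Real.logb r ((m:ℝ)+1) with hd
  have hcd : c < d := Real.logb_lt_logb hrR hmR (by linarith)
  set L := d - c with hL
  have hLpos : 0 < L := by simp only [hL]; linarith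
  set u := c + L/3 with hu
  set v := c + 2*L/3 with hv
  have hrc : (r:ℝ) ^ c = m := Real.rpow_logb hrpos hrne hmR
  have hrd : (r:ℝ) ^ d = (m:ℝ) + 1 := Real.rpow_logb hrpos hrne (by linarith)
  obtain ⟨a, hapos, cI, hδpos, hδsmall⟩ := exists_small_comb hαirr (show (0:ℝ) < L/6 by linarith)
  set δ := (a:ℝ) * α + (cI:ℝ) with hδdef
  have hδne : δ ≠ 0 := by
    intro h0; rw [h0] at hδpos; simp at hδpos
  have hlen : 2 * |δ| ≤ v - u := by
    have hvu : v - u = L/3 := by rw [hu, hv]; ring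
    rw [hvu]; linarith
  obtain ⟨K, hK⟩ := exists_nat_ge (1 / |δ|)
  set Imax := a * K with hImax
  -- r^u > m, gap g
  have hcu : c < u := by rw [hu]; linarith
  have hgu : (m:ℝ) < (r:ℝ) ^ u := by
    rw [← hrc]
    exact (Real.rpow_lt_rpow_left_iff hrR).mpr hcu
  set g := (r:ℝ)^u - (m:ℝ) with hg
  have hgpos : 0 < g := by rw [hg]; linarith
  obtain ⟨j0, hj0⟩ := exists_nat_gt (1/g)
  have hj0r : 1 ≤ (r:ℝ)^(j0:ℕ) * g := by
    have h1 : (j0:ℝ) < ((r^j0 : ℕ) : ℝ) := by exact_mod_cast (Nat.lt_pow_self hr1 : j0 < r ^ j0)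
    have h2 : ((r^j0 : ℕ) : ℝ) = (r:ℝ)^(j0:ℕ) := by push_cast; ring
    rw [h2] at h1
    have h3 : 1/g < (r:ℝ)^(j0:ℕ) := lt_trans hj0 h1
    rw [div_lt_iff₀ hgpos] at h3
    linarith
  -- pick N
  set T := (Imax:ℝ) * α + v + 1 + (j0:ℝ) with hT
  obtain ⟨M, hM⟩ := exists_nat_ge ((r:ℝ) ^ T)
  obtain ⟨N, hNA, hNM⟩ := hinf.exists_gt M
  have hNpos : 0 < N := lt_of_le_of_lt (Nat.zero_le M) hNM
  have hNposR : (0:ℝ) < (N:ℝ) := by exact_mod_cast hNpos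
  have hNR : (r:ℝ) ^ T ≤ (N:ℝ) := le_trans hM (by exact_mod_cast hNM.le)
  set x := Real.logb r N with hx
  have hxT : T ≤ x := by
    have h1 := Real.logb_le_logb_of_le hrR (Real.rpow_pos_of_pos hrpos T) hNR
    rwa [Real.logb_rpow hrpos hrne] at h1
  -- sweep
  obtain ⟨k, hk1, j, hj1, hj2⟩ := sweep hδne hlen x
  set i := k * a with hi
  set j' := j + (k:ℤ) * cI with hj'
  have hiα : x - (i:ℝ) * α = (x - (k:ℝ) * δ) + (k:ℝ) * (cI:ℝ) := by
    rw [hδdef, hi]; push_cast; ring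
  have hij1 : (j':ℝ) + u ≤ x - (i:ℝ) * α := by
    rw [hiα, hj']; push_cast; linarith
  have hij2 : x - (i:ℝ) * α ≤ (j':ℝ) + v := by
    rw [hiα, hj']; push_cast; linarith
  have hδabs : 0 < |δ| := hδpos
  have hkK : k ≤ K := by
    have h1 : (k:ℝ) ≤ 1/|δ| := by
      rw [le_div_iff₀ hδabs]; exact hk1
    have h2 : (k:ℝ) ≤ (K:ℝ) := le_trans h1 hK
    exact_mod_cast h2
  have hiI : (i:ℝ) * α ≤ (Imax:ℝ) * α := by
    have h1 : i ≤ Imax := by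
      rw [hi, hImax, Nat.mul_comm k a]
      exact Nat.mul_le_mul_left a hkK
    have h2 : (i:ℝ) ≤ (Imax:ℝ) := by exact_mod_cast h1
    exact mul_le_mul_of_nonneg_right h2 hαpos.le
  -- j' ≥ j0
  have hj'0 : (j0:ℝ) + 1 ≤ (j':ℝ) := by linarith
  have hj'nn : (0:ℤ) ≤ j' := by
    have h1 : (0:ℝ) ≤ (j':ℝ) := by
      have := Nat.cast_nonneg (α := ℝ) j0
      linarith
    exact_mod_cast h1
  set jn := j'.toNat with hjn
  have hj'eqZ : (jn:ℤ) = j' := Int.toNat_of_nonneg hj'nn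
  have hj'eq : ((jn:ℕ):ℝ) = (j':ℝ) := by exact_mod_cast hj'eqZ
  have hj0jn : j0 ≤ jn := by
    have h1 : (j0:ℝ) ≤ (jn:ℝ) := by rw [hj'eq]; linarith
    exact_mod_cast h1
  -- the real number y
  set y := (N:ℝ) / (s:ℝ)^i with hy
  have hspow : (0:ℝ) < (s:ℝ)^i := by positivity
  have hypos : 0 < y := by rw [hy]; positivity
  have hlogy : Real.logb r y = x - (i:ℝ) * α := by
    rw [hy, Real.logb_div (ne_of_gt hNposR) (ne_of_gt hspow), Real.logb_pow, hx, hα]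
  have hylow : (r:ℝ) ^ ((j':ℝ) + u) ≤ y := by
    have h1 : y = (r:ℝ) ^ Real.logb r y := (Real.rpow_logb hrpos hrne hypos).symm
    rw [h1]
    exact (Real.rpow_le_rpow_left_iff hrR).mpr (by rw [hlogy]; exact hij1)
  have hyhigh : y ≤ (r:ℝ) ^ ((j':ℝ) + v) := by
    have h1 : y = (r:ℝ) ^ Real.logb r y := (Real.rpow_logb hrpos hrne hypos).symm
    rw [h1]
    exact (Real.rpow_le_rpow_left_iff hrR).mpr (by rw [hlogy]; exact hij2)
  -- rewrite the rpow bounds using natural powers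
  set R := (r:ℝ)^(jn:ℕ) with hR
  have hRpos : 0 < R := by rw [hR]; positivity
  have hrj' : (r:ℝ) ^ ((j':ℝ)) = R := by
    rw [← hj'eq, Real.rpow_natCast, hR]
  have hsplitu : (r:ℝ) ^ ((j':ℝ) + u) = R * (r:ℝ)^u := by
    rw [Real.rpow_add hrpos, hrj']
  have hsplitv : (r:ℝ) ^ ((j':ℝ) + v) = R * (r:ℝ)^v := by
    rw [Real.rpow_add hrpos, hrj']
  -- lower bound : m * R + 1 ≤ y
  have hRge : (r:ℝ)^(j0:ℕ) ≤ R := by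
    rw [hR]
    exact pow_le_pow_right₀ (by linarith) hj0jn
  have hlow : (m:ℝ) * R + 1 ≤ y := by
    have h1 : (r:ℝ)^(j0:ℕ) * g ≤ R * g := mul_le_mul_of_nonneg_right hRge hgpos.le
    have h2 : R * (r:ℝ)^u = (m:ℝ) * R + R * g := by rw [hg]; ring
    rw [hsplitu, h2] at hylow
    linarith
  -- upper bound : y < (m+1) * R
  have hhigh : y < ((m:ℝ) + 1) * R := by
    have h1 : (r:ℝ)^v < (r:ℝ)^d := by
      apply (Real.rpow_lt_rpow_left_iff hrR).mpr
      rw [hv, hd]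
      show c + 2*L/3 < Real.logb r ((m:ℝ)+1)
      have : c + L = d := by rw [hL]; ring
      rw [hd] at this
      linarith
    have h2 : R * (r:ℝ)^v < R * (r:ℝ)^d := mul_lt_mul_of_pos_left h1 hRpos
    rw [hrd] at h2
    rw [hsplitv] at hyhigh
    linarith [hyhigh, h2]
  -- pass to naturals
  have hspowN : 0 < s ^ i := Nat.pow_pos (by omega : 0 < s)
  set nA := N / s ^ i with hnA
  have hnAA : nA ∈ A := hPs i N hNA
  have hcasts : ((s^i : ℕ):ℝ) = (s:ℝ)^i := by push_cast; ring
  have hcastR : ((r^jn : ℕ):ℝ) = R := by rw [hR]; push_cast; ring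
  have hlowN : m * r ^ jn ≤ nA := by
    rw [hnA, Nat.le_div_iff_mul_le hspowN]
    have h1 : ((m * r^jn * s^i : ℕ) : ℝ) ≤ (N:ℝ) := by
      push_cast
      have h2 : ((m:ℝ) * R + 1) * (s:ℝ)^i ≤ (N:ℝ) := by
        rw [hy] at hlow
        calc ((m:ℝ) * R + 1) * (s:ℝ)^i ≤ ((N:ℝ) / (s:ℝ)^i) * (s:ℝ)^i :=
              mul_le_mul_of_nonneg_right hlow hspow.le
          _ = (N:ℝ) := div_mul_cancel₀ _ (ne_of_gt hspow)
      have h3 : (0:ℝ) < (s:ℝ)^i := hspow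
      rw [hR] at h2
      have h4 : (m:ℝ) * (r:ℝ)^jn * (s:ℝ)^i ≤ ((m:ℝ) * (r:ℝ)^jn + 1) * (s:ℝ)^i := by
        have h5 : (m:ℝ) * (r:ℝ)^jn ≤ (m:ℝ) * (r:ℝ)^jn + 1 := by linarith
        exact mul_le_mul_of_nonneg_right h5 h3.le
      linarith [h2, h4]
    exact_mod_cast h1
  have hhighN : nA < (m + 1) * r ^ jn := by
    rw [hnA, Nat.div_lt_iff_lt_mul hspowN]
    have h1 : (N:ℝ) < (((m+1) * r^jn * s^i : ℕ) : ℝ) := by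
      have h2 : (N:ℝ) < ((m:ℝ)+1) * R * (s:ℝ)^i := by
        rw [hy] at hhigh
        have := mul_lt_mul_of_pos_right hhigh hspow
        rwa [div_mul_cancel₀ _ (ne_of_gt hspow)] at this
      rw [hR] at h2
      push_cast
      linarith [h2]
    exact_mod_cast h1
  have hfinal : nA / r ^ jn = m := Nat.div_eq_of_lt_le hlowN (by
    have : (m + 1) * r ^ jn = (m + 1) * r ^ jn := rfl
    simpa using hhighN)
  have := hPr jn nA hnAA
  rwa [hfinal] at this
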